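/- arXiv:2402.19365 — 3 statements merged into one kernel-verified Lean document; each statement's English description precedes it below -/
import Mathlib

section
/- Let C be a finite type, k a non-negative integer, and 𝓕 a finite family of nonempty finite subsets of C, each of cardinality at most 2. Define a simple graph H on the vertex set C ⊕ C (original vertices inl a and dummy vertices inr a) by: inl a is adjacent to inl b if and only if a ≠ b and {a, b} ∈ 𝓕; inl a is adjacent to inr a if and only if the singleton {a} ∈ 𝓕; and there are no other adjacencies. Then there exists W ⊆ C with |W| ≤ k and W ∩ F nonempty for every F ∈ 𝓕 if and only if H has a vertex cover of size at most k. -/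
/-- `S` is a vertex cover of the simple graph `G`: every edge of `G` has at
least one endpoint in `S`. -/
def IsVertexCover {V : Type*} (G : SimpleGraph V) (S : Finset V) : Prop :=
  ∀ e ∈ G.edgeSet, ∃ v ∈ S, v ∈ e

/-- The reduction graph `H` on vertex set `C ⊕ C` associated with a family `𝓕`
of subsets of `C` of size at most two: `inl a` is adjacent to `inl b` iff
`a ≠ b` and `{a, b} ∈ 𝓕`; `inl a` is adjacent to the dummy vertex `inr a` iff
the singleton `{a} ∈ 𝓕`; and there are no other adjacencies. -/
def direGraph {C : Type*} [DecidableEq C] (𝓕 : Finset (Finset C)) :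
    SimpleGraph (C ⊕ C) where
  Adj x y :=
    match x, y with
    | Sum.inl a, Sum.inl b => a ≠ b ∧ {a, b} ∈ 𝓕
    | Sum.inl a, Sum.inr b => a = b ∧ {a} ∈ 𝓕
    | Sum.inr a, Sum.inl b => a = b ∧ {b} ∈ 𝓕
    | Sum.inr _, Sum.inr _ => False
  symm := by
    constructor
    rintro (a | a) (b | b) h
    · obtain ⟨h1, h2⟩ := h
      exact ⟨h1.symm, by rwa [Finset.pair_comm] at h2⟩
    · obtain ⟨h1, h2⟩ := h
      exact ⟨h1.symm, h2⟩
    · obtain ⟨h1, h2⟩ := h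
      subst h1
      exact ⟨rfl, h2⟩
    · exact h
  loopless := by
    constructor
    rintro (a | a) h
    · exact h.1 rfl
    · exact h

/-- Correctness of the reduction from the DiRe committee feasibility problem to
vertex cover: for a family `𝓕` of nonempty subsets of `C`, each of cardinality
at most two, there is a committee (hitting set) `W ⊆ C` with `|W| ≤ k` meeting
every member of `𝓕` if and only if the reduction graph `H` has a vertex cover
of size at most `k`. -/
theorem committee_iff_vertexCover
    {C : Type*} [Fintype C] [DecidableEq C]
    (𝓕 : Finset (Finset C)) (h𝓕 : ∀ F ∈ 𝓕, F.Nonempty ∧ F.card ≤ 2) (k : ℕ) :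
    (∃ W : Finset C, W.card ≤ k ∧ ∀ F ∈ 𝓕, (W ∩ F).Nonempty) ↔
    (∃ S : Finset (C ⊕ C), IsVertexCover (direGraph 𝓕) S ∧ S.card ≤ k) := by
  constructor
  · rintro ⟨W, hWk, hW⟩
    refine ⟨W.image Sum.inl, ?_, (Finset.card_image_le).trans hWk⟩
    intro e he
    induction e with
    | _ x y =>
      rw [SimpleGraph.mem_edgeSet] at he
      rcases x with a | a <;> rcases y with b | b <;> simp only [direGraph] at he
      · obtain ⟨hab, hF⟩ := he
        obtain ⟨c, hc⟩ := hW _ hF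
        rw [Finset.mem_inter] at hc
        rcases Finset.mem_insert.1 hc.2 with rfl | hc2
        · exact ⟨Sum.inl c, Finset.mem_image_of_mem _ hc.1, Sym2.mem_mk_left _ _⟩
        · rw [Finset.mem_singleton] at hc2; subst hc2
          exact ⟨Sum.inl c, Finset.mem_image_of_mem _ hc.1, Sym2.mem_mk_right _ _⟩
      · obtain ⟨hab, hF⟩ := he
        obtain ⟨c, hc⟩ := hW _ hF
        rw [Finset.mem_inter, Finset.mem_singleton] at hc
        obtain ⟨hc1, rfl⟩ := hc
        exact ⟨Sum.inl c, Finset.mem_image_of_mem _ hc1, Sym2.mem_mk_left _ _⟩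
      · obtain ⟨hab, hF⟩ := he
        subst hab
        obtain ⟨c, hc⟩ := hW _ hF
        rw [Finset.mem_inter, Finset.mem_singleton] at hc
        obtain ⟨hc1, rfl⟩ := hc
        exact ⟨Sum.inl c, Finset.mem_image_of_mem _ hc1, Sym2.mem_mk_right _ _⟩
  · rintro ⟨S, hS, hSk⟩
    refine ⟨S.image (Sum.elim id id), (Finset.card_image_le).trans hSk, ?_⟩
    intro F hF
    obtain ⟨hne, hcard⟩ := h𝓕 F hF
    have h1 := Finset.one_le_card.2 hne
    interval_cases h : F.card
    · obtain ⟨a, rfl⟩ := Finset.card_eq_one.1 h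
      have hadj : (direGraph 𝓕).Adj (Sum.inl a) (Sum.inr a) := ⟨rfl, hF⟩
      obtain ⟨v, hv, hve⟩ :=
        hS s(Sum.inl a, Sum.inr a) (SimpleGraph.mem_edgeSet (direGraph 𝓕) |>.2 hadj)
      rw [Sym2.mem_iff] at hve
      have ha : a ∈ S.image (Sum.elim id id) := by
        rcases hve with rfl | rfl
        · simpa using Finset.mem_image_of_mem (Sum.elim id id) hv
        · simpa using Finset.mem_image_of_mem (Sum.elim id id) hv
      exact ⟨a, Finset.mem_inter.2 ⟨ha, Finset.mem_singleton_self a⟩⟩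
    · obtain ⟨a, b, hab, rfl⟩ := Finset.card_eq_two.1 h
      have hadj : (direGraph 𝓕).Adj (Sum.inl a) (Sum.inl b) := ⟨hab, hF⟩
      obtain ⟨v, hv, hve⟩ :=
        hS s(Sum.inl a, Sum.inl b) (SimpleGraph.mem_edgeSet (direGraph 𝓕) |>.2 hadj)
      rw [Sym2.mem_iff] at hve
      rcases hve with rfl | rfl
      · refine ⟨a, Finset.mem_inter.2 ⟨?_, Finset.mem_insert_self a _⟩⟩
        simpa using Finset.mem_image_of_mem (Sum.elim id id) hv
      · refine ⟨b, Finset.mem_inter.2 ⟨?_,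
          Finset.mem_insert_of_mem (Finset.mem_singleton_self b)⟩⟩
        simpa using Finset.mem_image_of_mem (Sum.elim id id) hv
end

section
/- Let G be a finite simple graph on vertex set V and k a non-negative integer. Define a simple graph G' on the vertex set V ⊕ Unit by: inl a is adjacent to inl b if and only if a and b are adjacent in G, and the dummy vertex inr () is adjacent to inl v for every v ∈ V. Then G has a vertex cover of size at most k if and only if G' has a vertex cover of size at most k + 1. -/
/-- The graph obtained from `G` by adding a universal dummy vertex `inr ()`:
`inl a` and `inl b` are adjacent iff `a` and `b` are adjacent in `G`, and the
dummy vertex `inr ()` is adjacent to `inl v` for every vertex `v`. -/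
def addUniversal {V : Type*} (G : SimpleGraph V) : SimpleGraph (V ⊕ Unit) where
  Adj x y :=
    match x, y with
    | Sum.inl a, Sum.inl b => G.Adj a b
    | Sum.inl _, Sum.inr _ => True
    | Sum.inr _, Sum.inl _ => True
    | Sum.inr _, Sum.inr _ => False
  symm := by
    constructor
    rintro (a | a) (b | b) h
    · exact SimpleGraph.Adj.symm h
    · exact h
    · exact h
    · exact h
  loopless := by
    constructor
    rintro (a | a) h
    · exact G.irrefl h
    · exact h

/-- A finite simple graph `G` has a vertex cover of size at most `k` if and
only if the graph `G'` obtained from `G` by adding a universal dummy vertex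
has a vertex cover of size at most `k + 1`. -/
theorem addUniversal_vertexCover_iff
    {V : Type*} [Fintype V] [DecidableEq V] (G : SimpleGraph V) (k : ℕ) :
    (∃ S : Finset V, IsVertexCover G S ∧ S.card ≤ k) ↔
    (∃ S' : Finset (V ⊕ Unit), IsVertexCover (addUniversal G) S' ∧ S'.card ≤ k + 1) := by
  classical
  constructor
  · rintro ⟨S, hS, hk⟩
    refine ⟨S.image Sum.inl ∪ {Sum.inr ()}, ?_, ?_⟩
    · intro e he
      induction e using Sym2.ind with
      | _ x y =>
        rw [SimpleGraph.mem_edgeSet] at he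
        match x, y, he with
        | Sum.inl a, Sum.inl b, he =>
          obtain ⟨v, hv, hve⟩ := hS s(a, b) he
          refine ⟨Sum.inl v, ?_, ?_⟩
          · exact Finset.mem_union_left _ (Finset.mem_image_of_mem _ hv)
          · rcases Sym2.mem_iff.mp hve with h | h <;> subst h <;>
              simp [Sym2.mem_iff]
        | Sum.inl a, Sum.inr b, _ =>
          exact ⟨Sum.inr (), Finset.mem_union_right _ (by simp), by simp⟩
        | Sum.inr a, Sum.inl b, _ =>
          exact ⟨Sum.inr (), Finset.mem_union_right _ (by simp), by simp⟩
    · calc (S.image Sum.inl ∪ {Sum.inr ()}).card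
          ≤ (S.image Sum.inl).card + ({Sum.inr ()} : Finset (V ⊕ Unit)).card :=
            Finset.card_union_le _ _
        _ = (S.image Sum.inl).card + 1 := by rw [Finset.card_singleton]
        _ ≤ k + 1 := Nat.add_le_add_right (le_trans Finset.card_image_le hk) 1
  · rintro ⟨S', hS', hk⟩
    by_cases hdum : Sum.inr () ∈ S'
    · -- take preimage of S' under inl
      refine ⟨S'.preimage Sum.inl (Sum.inl_injective.injOn), ?_, ?_⟩
      · intro e he
        induction e using Sym2.ind with
        | _ a b =>
          rw [SimpleGraph.mem_edgeSet] at he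
          obtain ⟨w, hw, hwe⟩ := hS' s(Sum.inl a, Sum.inl b) he
          match w, hwe with
          | Sum.inl v, hwe =>
            refine ⟨v, Finset.mem_preimage.mpr hw, ?_⟩
            rcases Sym2.mem_iff.mp hwe with h | h <;>
              simp_all [Sym2.mem_iff]
          | Sum.inr u, hwe =>
            exfalso
            rcases Sym2.mem_iff.mp hwe with h | h <;> simp_all
      · have hsub : (S'.preimage Sum.inl (Sum.inl_injective.injOn)).image Sum.inl
            ⊆ S'.erase (Sum.inr ()) := by
          intro x hx
          obtain ⟨v, hv, rfl⟩ := Finset.mem_image.mp hx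
          exact Finset.mem_erase.mpr ⟨by simp, Finset.mem_preimage.mp hv⟩
        have h1 : (S'.preimage Sum.inl (Sum.inl_injective.injOn)).card
            ≤ (S'.erase (Sum.inr ())).card := by
          calc (S'.preimage Sum.inl (Sum.inl_injective.injOn)).card
              = ((S'.preimage Sum.inl (Sum.inl_injective.injOn)).image Sum.inl).card :=
                (Finset.card_image_of_injective _ Sum.inl_injective).symm
            _ ≤ _ := Finset.card_le_card hsub
        have h2 : (S'.erase (Sum.inr ())).card ≤ k := by
          have := Finset.card_erase_of_mem hdum
          omega
        exact h1.trans h2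
    · -- dummy not in S': every vertex's inl is in S'
      have hall : ∀ v : V, Sum.inl v ∈ S' := by
        intro v
        obtain ⟨w, hw, hwe⟩ := hS' s(Sum.inl v, Sum.inr ()) (by
          rw [SimpleGraph.mem_edgeSet]; trivial)
        rcases Sym2.mem_iff.mp hwe with h | h
        · exact h ▸ hw
        · exact absurd (h ▸ hw) hdum
      by_cases hV : Nonempty V
      · obtain ⟨v0⟩ := hV
        refine ⟨Finset.univ.erase v0, ?_, ?_⟩
        · intro e he
          induction e using Sym2.ind with
          | _ a b =>
            rw [SimpleGraph.mem_edgeSet] at he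
            by_cases hab : a = v0
            · subst hab
              exact ⟨b, Finset.mem_erase.mpr ⟨(G.ne_of_adj he).symm, Finset.mem_univ b⟩,
                Sym2.mem_mk_right _ _⟩
            · exact ⟨a, Finset.mem_erase.mpr ⟨hab, Finset.mem_univ a⟩,
                Sym2.mem_mk_left _ _⟩
        · have hsub : (Finset.univ : Finset V).image Sum.inl ⊆ S' := by
            intro x hx
            obtain ⟨v, _, rfl⟩ := Finset.mem_image.mp hx
            exact hall v
          have : (Finset.univ : Finset V).card ≤ S'.card := by
            calc (Finset.univ : Finset V).card
                = ((Finset.univ : Finset V).image Sum.inl).card :=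
                  (Finset.card_image_of_injective _ Sum.inl_injective).symm
              _ ≤ S'.card := Finset.card_le_card hsub
          have := Finset.card_erase_of_mem (Finset.mem_univ v0)
          omega
      · refine ⟨∅, ?_, by simp⟩
        intro e he
        induction e using Sym2.ind with
        | _ a b => exact absurd ⟨a⟩ hV
end

section
/- Let V be a finite type, let r be a symmetric relation on V (loops r(a,a) allowed), and let k be a non-negative integer. Define a simple graph G' on the vertex set (V ⊕ V) ⊕ Unit by: inl (inl a) is adjacent to inl (inl b) if and only if a ≠ b and r(a,b); inl (inl a) is adjacent to inl (inr a) if and only if r(a,a); and inr () is adjacent to every other vertex of G'. Then there exists a set S ⊆ V with |S| ≤ k such that for all a, b ∈ V with r(a,b), a ∈ S or b ∈ S, if and only if G' has a vertex cover of size at most k + 1. -/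
/-- The simple connected graph `G'` on vertex set `(V ⊕ V) ⊕ Unit` associated
with a symmetric relation `r` on `V` (loops allowed): `inl (inl a)` is adjacent
to `inl (inl b)` iff `a ≠ b` and `r a b`; `inl (inl a)` is adjacent to the
dummy vertex `inl (inr a)` iff `r a a` (a pendant edge replacing the loop at
`a`); and the universal dummy vertex `inr ()` is adjacent to every other
vertex. -/
def loopReductionGraph {V : Type*} (r : V → V → Prop) (hr : Symmetric r) :
    SimpleGraph ((V ⊕ V) ⊕ Unit) where
  Adj x y :=
    match x, y with
    | Sum.inl (Sum.inl a), Sum.inl (Sum.inl b) => a ≠ b ∧ r a b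
    | Sum.inl (Sum.inl a), Sum.inl (Sum.inr b) => a = b ∧ r a a
    | Sum.inl (Sum.inr a), Sum.inl (Sum.inl b) => a = b ∧ r b b
    | Sum.inl (Sum.inr _), Sum.inl (Sum.inr _) => False
    | Sum.inl _, Sum.inr _ => True
    | Sum.inr _, Sum.inl _ => True
    | Sum.inr _, Sum.inr _ => False
  symm := by
    constructor
    rintro ((a | a) | u) ((b | b) | u') h
    · obtain ⟨h1, h2⟩ := h
      exact ⟨h1.symm, hr h2⟩
    · obtain ⟨h1, h2⟩ := h
      exact ⟨h1.symm, h2⟩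
    · exact trivial
    · obtain ⟨h1, h2⟩ := h
      exact ⟨h1.symm, h2⟩
    · exact h
    · exact trivial
    · exact trivial
    · exact trivial
    · exact h
  loopless := by
    constructor
    rintro ((a | a) | u) h
    · exact h.1 rfl
    · exact h
    · exact h

/-- Correctness of the reduction from vertex cover on an unweighted undirected
graph possibly with loops (modeled by a symmetric relation `r` on `V`) to
vertex cover on the unweighted simple connected graph `G'`: there is a set
`S ⊆ V` with `|S| ≤ k` covering every related pair of `r` if and only if `G'`
has a vertex cover of size at most `k + 1`. -/
theorem relCover_iff_vertexCover
    {V : Type*} [Fintype V] [DecidableEq V]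
    (r : V → V → Prop) (hr : Symmetric r) (k : ℕ) :
    (∃ S : Finset V, S.card ≤ k ∧ ∀ a b : V, r a b → a ∈ S ∨ b ∈ S) ↔
    (∃ S' : Finset ((V ⊕ V) ⊕ Unit),
        IsVertexCover (loopReductionGraph r hr) S' ∧ S'.card ≤ k + 1) := by
  constructor
  · rintro ⟨S, hcard, hcov⟩
    refine ⟨S.image (fun a => Sum.inl (Sum.inl a)) ∪ {Sum.inr ()}, ?_, ?_⟩
    · intro e he
      induction e using Sym2.ind with
      | _ x y =>
        rw [SimpleGraph.mem_edgeSet] at he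
        match x, y, he with
        | Sum.inl (Sum.inl a), Sum.inl (Sum.inl b), ⟨hab, hr'⟩ =>
          rcases hcov a b hr' with h | h
          · exact ⟨Sum.inl (Sum.inl a), by simp [h], by simp⟩
          · exact ⟨Sum.inl (Sum.inl b), by simp [h], by simp⟩
        | Sum.inl (Sum.inl a), Sum.inl (Sum.inr b), ⟨hab, hr'⟩ =>
          rcases hcov a a hr' with h | h <;>
            exact ⟨Sum.inl (Sum.inl a), by simp [h], by simp⟩
        | Sum.inl (Sum.inr a), Sum.inl (Sum.inl b), ⟨hab, hr'⟩ =>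
          rcases hcov b b hr' with h | h <;>
            exact ⟨Sum.inl (Sum.inl b), by simp [h], by simp⟩
        | Sum.inl v, Sum.inr u, _ =>
          exact ⟨Sum.inr (), by simp, by simp⟩
        | Sum.inr u, Sum.inl v, _ =>
          exact ⟨Sum.inr (), by simp, by simp⟩
    · calc (S.image (fun a => Sum.inl (Sum.inl a)) ∪ {Sum.inr ()}).card
          ≤ (S.image (fun a => Sum.inl (Sum.inl a) : V → (V ⊕ V) ⊕ Unit)).card
              + ({Sum.inr ()} : Finset ((V ⊕ V) ⊕ Unit)).card := Finset.card_union_le _ _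
        _ ≤ k + 1 := by
            have := Finset.card_image_le (s := S)
              (f := fun a => (Sum.inl (Sum.inl a) : (V ⊕ V) ⊕ Unit))
            simp only [Finset.card_singleton]
            omega
  · rintro ⟨S', hcov, hcard⟩
    set S : Finset V := Finset.univ.filter
      (fun a => Sum.inl (Sum.inl a) ∈ S' ∨ Sum.inl (Sum.inr a) ∈ S') with hS
    have hScov : ∀ a b : V, r a b → a ∈ S ∨ b ∈ S := by
      intro a b hab
      by_cases h : a = b
      · subst h
        have he : (loopReductionGraph r hr).Adj (Sum.inl (Sum.inl a)) (Sum.inl (Sum.inr a)) :=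
          ⟨rfl, hab⟩
        obtain ⟨v, hv, hve⟩ := hcov _ ((loopReductionGraph r hr).mem_edgeSet.mpr he)
        rw [Sym2.mem_iff] at hve
        rcases hve with h1 | h1 <;> subst h1 <;> left <;> simp [hS, hv]
      · have he : (loopReductionGraph r hr).Adj (Sum.inl (Sum.inl a)) (Sum.inl (Sum.inl b)) :=
          ⟨h, hab⟩
        obtain ⟨v, hv, hve⟩ := hcov _ ((loopReductionGraph r hr).mem_edgeSet.mpr he)
        rw [Sym2.mem_iff] at hve
        rcases hve with h1 | h1 <;> subst h1
        · left; simp [hS, hv]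
        · right; simp [hS, hv]
    by_cases hdum : Sum.inr () ∈ S'
    · refine ⟨S, ?_, hScov⟩
      have hinj : Set.InjOn (fun a => if Sum.inl (Sum.inl a) ∈ S'
          then (Sum.inl (Sum.inl a) : (V ⊕ V) ⊕ Unit) else Sum.inl (Sum.inr a)) S := by
        intro a _ b _ hgab
        dsimp only at hgab
        split_ifs at hgab <;> simp_all
      have hmaps : ∀ a ∈ S, (if Sum.inl (Sum.inl a) ∈ S'
          then (Sum.inl (Sum.inl a) : (V ⊕ V) ⊕ Unit) else Sum.inl (Sum.inr a))
          ∈ S'.erase (Sum.inr ()) := by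
        intro a ha
        simp only [hS, Finset.mem_filter] at ha
        split_ifs with h
        · exact Finset.mem_erase.mpr ⟨by simp, h⟩
        · exact Finset.mem_erase.mpr ⟨by simp, ha.2.resolve_left h⟩
      have := Finset.card_le_card_of_injOn _ hmaps hinj
      have := Finset.card_erase_of_mem hdum
      omega
    · have hall : ∀ v : V ⊕ V, Sum.inl v ∈ S' := by
        intro v
        have he : (loopReductionGraph r hr).Adj (Sum.inl v) (Sum.inr ()) := by
          cases v <;> trivial
        obtain ⟨w, hw, hwe⟩ := hcov _ ((loopReductionGraph r hr).mem_edgeSet.mpr he)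
        rw [Sym2.mem_iff] at hwe
        rcases hwe with h1 | h1 <;> subst h1
        · exact hw
        · exact absurd hw hdum
      rcases isEmpty_or_nonempty V with hV | hV
      · exact ⟨∅, by simp, fun a => isEmptyElim a⟩
      · refine ⟨S, ?_, hScov⟩
        have hsub : (Finset.univ.image (fun a : V => (Sum.inl (Sum.inl a) : (V ⊕ V) ⊕ Unit)))
            ∪ (Finset.univ.image (fun a : V => (Sum.inl (Sum.inr a) : (V ⊕ V) ⊕ Unit))) ⊆ S' := by
          intro x hx
          simp only [Finset.mem_union, Finset.mem_image] at hx
          rcases hx with ⟨a, _, rfl⟩ | ⟨a, _, rfl⟩ <;> exact hall _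
        have hdisj : Disjoint (Finset.univ.image (fun a : V => (Sum.inl (Sum.inl a) : (V ⊕ V) ⊕ Unit)))
            (Finset.univ.image (fun a : V => (Sum.inl (Sum.inr a) : (V ⊕ V) ⊕ Unit))) := by
          rw [Finset.disjoint_left]
          rintro x hx hy
          simp only [Finset.mem_image] at hx hy
          obtain ⟨a, _, rfl⟩ := hx
          obtain ⟨b, _, hb⟩ := hy
          simp at hb
        have h2V : 2 * Fintype.card V ≤ S'.card := by
          have := Finset.card_le_card hsub
          rw [Finset.card_union_of_disjoint hdisj,
            Finset.card_image_of_injective _ (fun a b h => by simpa using h),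
            Finset.card_image_of_injective _ (fun a b h => by simpa using h)] at this
          simpa [Finset.card_univ, two_mul] using this
        have hVpos : 1 ≤ Fintype.card V := Fintype.card_pos
        have hSle : S.card ≤ Fintype.card V := Finset.card_filter_le _ _ |>.trans (by simp)
        omega
end
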